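/- For every integer r ≥ 1, the convex hull 𝒜_r in ℝ^r of the set of all permutations of (1, 2, ..., r) is equal to the set 𝒜_r* = { (a_1,...,a_r) ∈ ℝ^r : Σ_{j=1}^r a_j = r(r+1)/2, and Σ_{j∈E} a_j ≥ |E|(|E|+1)/2 for every subset E ⊆ {1,...,r} }. -/

import Mathlib

open Finset

/-- Sum of the elements of a finset of naturals is at least 0+1+...+(card-1). -/
lemma sum_range_card_le_sum (s : Finset ℕ) : ∑ k ∈ range s.card, k ≤ ∑ x ∈ s, x := by
  induction s using Finset.strongInduction with
  | _ s ih =>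
    rcases s.eq_empty_or_nonempty with rfl | hs
    · simp
    · have hm : s.max' hs ∈ s := s.max'_mem hs
      have hsub : s ⊆ range (s.max' hs + 1) := fun x hx =>
        mem_range.2 (Nat.lt_succ_of_le (s.le_max' x hx))
      have hcard : s.card ≤ s.max' hs + 1 := by
        simpa using Finset.card_le_card hsub
      have h1 : (s.erase (s.max' hs)).card = s.card - 1 := card_erase_of_mem hm
      have h3 := ih (s.erase (s.max' hs)) (Finset.erase_ssubset hm)
      rw [h1] at h3
      have hc1 : 1 ≤ s.card := Finset.card_pos.2 hs
      have h4 : s.card - 1 ≤ s.max' hs := by omega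
      have h5 : s.card - 1 + 1 = s.card := by omega
      calc ∑ k ∈ range s.card, k = ∑ k ∈ range (s.card - 1), k + (s.card - 1) := by
            rw [← h5, Finset.sum_range_succ]; simp
        _ ≤ ∑ x ∈ s.erase (s.max' hs), x + s.max' hs := add_le_add h3 h4
        _ = ∑ x ∈ s, x := Finset.sum_erase_add s (fun x => x) hm

lemma gauss_real (n : ℕ) : ∑ k ∈ range n, ((k : ℝ) + 1) = (n : ℝ) * ((n : ℝ) + 1) / 2 := by
  induction n with
  | zero => simp
  | succ m ihm =>
    rw [Finset.sum_range_succ, ihm]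
    push_cast
    ring


/-- The candidate polytope 𝒜_r*. -/
def permBody (r : ℕ) : Set (Fin r → ℝ) :=
  {a : Fin r → ℝ |
    (∑ j, a j) = (r : ℝ) * ((r : ℝ) + 1) / 2 ∧
    ∀ E : Finset (Fin r), (E.card : ℝ) * ((E.card : ℝ) + 1) / 2 ≤ ∑ j ∈ E, a j}

def IsTight {r : ℕ} (a : Fin r → ℝ) (E : Finset (Fin r)) : Prop :=
  ∑ j ∈ E, a j = (E.card : ℝ) * ((E.card : ℝ) + 1) / 2

lemma isTight_empty {r : ℕ} (a : Fin r → ℝ) : IsTight a (∅ : Finset (Fin r)) := by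
  simp [IsTight]

lemma isTight_univ {r : ℕ} {a : Fin r → ℝ} (ha : a ∈ permBody r) :
    IsTight a (Finset.univ : Finset (Fin r)) := by
  simpa [IsTight, Finset.card_univ] using ha.1

/-- Any two tight sets are comparable. -/
lemma tight_chain {r : ℕ} {a : Fin r → ℝ} (ha : a ∈ permBody r)
    {E F : Finset (Fin r)} (hE : IsTight a E) (hF : IsTight a F) :
    E ⊆ F ∨ F ⊆ E := by
  by_contra hcon
  push_neg at hcon
  have key : ∑ j ∈ E ∪ F, a j + ∑ j ∈ E ∩ F, a j = ∑ j ∈ E, a j + ∑ j ∈ F, a j :=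
    Finset.sum_union_inter
  have hcard : (E ∪ F).card + (E ∩ F).card = E.card + F.card :=
    Finset.card_union_add_card_inter E F
  have h1 := ha.2 (E ∪ F)
  have h2 := ha.2 (E ∩ F)
  have hce : (E ∩ F).card < E.card := by
    refine lt_of_le_of_ne (Finset.card_le_card Finset.inter_subset_left) fun h => ?_
    exact hcon.1 (Finset.inter_eq_left.1
      (Finset.eq_of_subset_of_card_le Finset.inter_subset_left h.ge))
  have hcf : (E ∩ F).card < F.card := by
    refine lt_of_le_of_ne (Finset.card_le_card Finset.inter_subset_right) fun h => ?_
    exact hcon.2 (Finset.inter_eq_right.1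
      (Finset.eq_of_subset_of_card_le Finset.inter_subset_right h.ge))
  rw [IsTight] at hE hF
  have hcR : ((E ∪ F).card : ℝ) + ((E ∩ F).card : ℝ) = (E.card : ℝ) + (F.card : ℝ) := by
    exact_mod_cast congrArg (Nat.cast : ℕ → ℝ) hcard
  have he' : ((E ∩ F).card : ℝ) + 1 ≤ (E.card : ℝ) := by exact_mod_cast hce
  have hf' : ((E ∩ F).card : ℝ) + 1 ≤ (F.card : ℝ) := by exact_mod_cast hcf
  nlinarith [h1, h2, key, hE, hF, hcR, he', hf']

open scoped Classical in
/-- At an extreme point, every pair of coordinates is separated by a tight set. -/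
lemma exists_tight_separating {r : ℕ} {a : Fin r → ℝ}
    (ha : a ∈ (permBody r).extremePoints ℝ) {i j : Fin r} (hij : i ≠ j) :
    ∃ E : Finset (Fin r), IsTight a E ∧ ((i ∈ E ∧ j ∉ E) ∨ (j ∈ E ∧ i ∉ E)) := by
  obtain ⟨haP, hext⟩ := ha
  by_contra hcon
  have hsep : ∀ E : Finset (Fin r), IsTight a E → (i ∈ E ↔ j ∈ E) := by
    intro E hE
    by_contra hiff
    apply hcon
    refine ⟨E, hE, ?_⟩
    by_cases hi : i ∈ E <;> by_cases hj : j ∈ E <;> tauto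
  set S : Finset (Finset (Fin r)) := Finset.univ.filter (fun E => ¬ (i ∈ E ↔ j ∈ E)) with hS
  have hiS : ({i} : Finset (Fin r)) ∈ S := by
    simp [hS, Finset.mem_filter, hij.symm]
  obtain ⟨E₀, hE₀S, hmin⟩ :=
    S.exists_min_image (fun E => ∑ x ∈ E, a x - (E.card : ℝ) * ((E.card : ℝ) + 1) / 2) ⟨_, hiS⟩
  set ε := ∑ x ∈ E₀, a x - (E₀.card : ℝ) * ((E₀.card : ℝ) + 1) / 2 with hε
  have hE₀nt : ¬ IsTight a E₀ := by
    intro ht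
    have := hsep E₀ ht
    simp [hS, Finset.mem_filter] at hE₀S
    exact hE₀S this
  have hεpos : 0 < ε := by
    have hle := haP.2 E₀
    rcases lt_or_eq_of_le hle with h | h
    · simpa [hε] using sub_pos.2 h
    · exact absurd h.symm hE₀nt
  clear_value ε
  set d : Fin r → ℝ := fun k => (if k = i then ε else 0) - (if k = j then ε else 0) with hd
  have hdsum : ∀ E : Finset (Fin r),
      ∑ x ∈ E, d x = (if i ∈ E then ε else 0) - (if j ∈ E then ε else 0) := by
    intro E
    simp [hd, Finset.sum_sub_distrib, Finset.sum_ite_eq' E]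
  have key : ∀ c : ℝ, c = 1 ∨ c = -1 → (fun k => a k + c * d k) ∈ permBody r := by
    intro c hc
    constructor
    · have : ∑ x : Fin r, d x = 0 := by
        rcases eq_or_ne r 0 with rfl | hr0
        · exact Fin.elim0 i
        · simp [hdsum]
      simp only [Finset.sum_add_distrib, ← Finset.mul_sum, this, mul_zero, add_zero]
      exact haP.1
    · intro E
      have hEc := haP.2 E
      have hdE := hdsum E
      have hsplit : ∑ x ∈ E, (a x + c * d x) = ∑ x ∈ E, a x + c * ∑ x ∈ E, d x := by
        rw [Finset.sum_add_distrib, Finset.mul_sum]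
      by_cases hiff : (i ∈ E ↔ j ∈ E)
      · have hz : ∑ x ∈ E, d x = 0 := by
          by_cases hi : i ∈ E
          · simp [hdE, hi, hiff.1 hi]
          · have hj : j ∉ E := fun h => hi (hiff.2 h)
            simp [hdE, hi, hj]
        rw [hsplit, hz, mul_zero, add_zero]
        exact hEc
      · have hES : E ∈ S := by simp [hS, Finset.mem_filter, hiff]
        have hslack := hmin E hES
        have habs : ∑ x ∈ E, d x = ε ∨ ∑ x ∈ E, d x = -ε := by
          by_cases hi : i ∈ E <;> by_cases hj : j ∈ E
          · exact absurd (iff_of_true hi hj) hiff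
          · left; simp [hdE, hi, hj]
          · right; simp [hdE, hi, hj]
          · exact absurd (iff_of_false hi hj) hiff
        rw [hsplit]
        rcases hc with rfl | rfl <;> rcases habs with h | h <;> rw [h] <;>
          linarith [hεpos, hslack, hEc]
  have hx := key 1 (Or.inl rfl)
  have hy := key (-1) (Or.inr rfl)
  have hseg : a ∈ openSegment ℝ (fun k => a k + 1 * d k) (fun k => a k + (-1) * d k) := by
    refine ⟨1/2, 1/2, by norm_num, by norm_num, by norm_num, ?_⟩
    funext k
    simp only [Pi.add_apply, Pi.smul_apply, smul_eq_mul]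
    ring
  have h1 := hext hx hy hseg
  have hdi : d i = 0 := by
    have := congrFun h1 i
    simp only [one_mul] at this
    linarith
  rw [hd] at hdi
  simp [hij] at hdi
  exact hεpos.ne' hdi

open scoped Classical in
/-- Every extreme point of the polytope is a permutation vector. -/
lemma extremePoint_isPerm {r : ℕ} {a : Fin r → ℝ}
    (ha : a ∈ (permBody r).extremePoints ℝ) :
    ∃ σ : Equiv.Perm (Fin r), a = fun i => ((σ i : ℕ) : ℝ) + 1 := by
  have haP : a ∈ permBody r := ha.1
  -- minimal tight set containing i
  have hTex : ∀ i : Fin r, ∃ T : Finset (Fin r),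
      (IsTight a T ∧ i ∈ T) ∧ ∀ E, IsTight a E → i ∈ E → T ⊆ E := by
    intro i
    set F : Finset (Finset (Fin r)) :=
      Finset.univ.filter (fun E => IsTight a E ∧ i ∈ E) with hF
    have hne : F.Nonempty := ⟨Finset.univ, by simp [hF, isTight_univ haP]⟩
    obtain ⟨T, hTF, hTmin⟩ := F.exists_min_image Finset.card hne
    simp only [hF, Finset.mem_filter, Finset.mem_univ, true_and] at hTF
    refine ⟨T, hTF, fun E hE hiE => ?_⟩
    have hEF : E ∈ F := by simp [hF, hE, hiE]
    rcases tight_chain haP hTF.1 hE with h | h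
    · exact h
    · have := hTmin E hEF
      have hET : E = T := Finset.eq_of_subset_of_card_le h this
      rw [hET]
  choose T hT1 hT2 using hTex
  have hmem : ∀ i, i ∈ T i := fun i => (hT1 i).2
  have htight : ∀ i, IsTight a (T i) := fun i => (hT1 i).1
  have hpos : ∀ i, 1 ≤ (T i).card := fun i => Finset.card_pos.2 ⟨i, hmem i⟩
  have hler : ∀ i, (T i).card ≤ r := fun i => by
    simpa using Finset.card_le_card (Finset.subset_univ (T i))
  -- T i minus i is tight
  have herase : ∀ i, IsTight a ((T i).erase i) := by
    intro i
    set F' : Finset (Finset (Fin r)) :=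
      Finset.univ.filter (fun E => IsTight a E ∧ E ⊆ (T i).erase i) with hF'
    have hne' : F'.Nonempty := ⟨∅, by simp [hF', isTight_empty]⟩
    obtain ⟨M, hMF, hMmax⟩ := F'.exists_max_image Finset.card hne'
    simp only [hF', Finset.mem_filter, Finset.mem_univ, true_and] at hMF
    suffices hsuff : M = (T i).erase i by rw [← hsuff]; exact hMF.1
    refine Finset.Subset.antisymm hMF.2 ?_
    intro j hj
    obtain ⟨hjne, hjT⟩ := Finset.mem_erase.1 hj
    obtain ⟨E, hEt, hcase⟩ := exists_tight_separating ha (Ne.symm hjne)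
    rcases hcase with ⟨hiE, hjE⟩ | ⟨hjE, hiE⟩
    · exact absurd (hT2 i E hEt hiE hjT) hjE
    · have hET : E ⊆ T i := by
        rcases tight_chain haP hEt (htight i) with h | h
        · exact h
        · exact absurd (h (hmem i)) hiE
      have hEer : E ⊆ (T i).erase i := Finset.subset_erase.2 ⟨hET, hiE⟩
      have hEF' : E ∈ F' := by simp [hF', hEt, hEer]
      rcases tight_chain haP hEt hMF.1 with h | h
      · exact h hjE
      · have : M = E := Finset.eq_of_subset_of_card_le h (hMmax E hEF')
        exact this ▸ hjE
  -- value formula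
  have hval : ∀ i, a i = ((T i).card : ℝ) := by
    intro i
    have h1 := htight i
    have h2 := herase i
    have hc : ((T i).erase i).card = (T i).card - 1 := Finset.card_erase_of_mem (hmem i)
    have hsum : a i + ∑ x ∈ (T i).erase i, a x = ∑ x ∈ T i, a x :=
      Finset.add_sum_erase _ _ (hmem i)
    rw [IsTight] at h1 h2
    rw [hc] at h2
    have hcast : (((T i).card - 1 : ℕ) : ℝ) = ((T i).card : ℝ) - 1 := by
      exact_mod_cast Nat.cast_sub (hpos i)
    rw [hcast] at h2
    nlinarith [h1, h2, hsum]
  -- injectivity of card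
  have hinj : Function.Injective (fun i => (T i).card) := by
    intro i j hcc
    by_contra hne
    simp only at hcc
    obtain ⟨E, hEt, hcase⟩ := exists_tight_separating ha hne
    have hlt : ∀ p q : Fin r, p ∈ E → q ∉ E → IsTight a E → (T p).card < (T q).card := by
      intro p q hp hq hEt'
      have hTpE : T p ⊆ E := hT2 p E hEt' hp
      have hqTp : q ∉ T p := fun h => hq (hTpE h)
      have hsub : T p ⊆ T q := by
        rcases tight_chain haP (htight q) (htight p) with h | h
        · exact absurd (h (hmem q)) hqTp
        · exact h
      exact Finset.card_lt_card ⟨hsub, fun h => hqTp (h (hmem q))⟩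
    rcases hcase with ⟨hiE, hjE⟩ | ⟨hjE, hiE⟩
    · exact absurd hcc (hlt i j hiE hjE hEt).ne
    · exact absurd hcc.symm (hlt j i hjE hiE hEt).ne
  -- build the permutation
  have hbound : ∀ i : Fin r, (T i).card - 1 < r := fun i => by
    have := hpos i; have := hler i; omega
  set f : Fin r → Fin r := fun i => ⟨(T i).card - 1, hbound i⟩ with hf
  have hfinj : Function.Injective f := by
    intro i j hij
    apply hinj
    have h1 := congrArg Fin.val hij
    simp only [hf] at h1
    have := hpos i; have := hpos j
    show (T i).card = (T j).card
    omega
  refine ⟨Equiv.ofBijective f (Finite.injective_iff_bijective.1 hfinj), ?_⟩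
  funext i
  have : ((f i : ℕ) : ℝ) + 1 = ((T i).card : ℝ) := by
    simp only [hf]
    have : (((T i).card - 1 : ℕ) : ℝ) = ((T i).card : ℝ) - 1 := by
      exact_mod_cast Nat.cast_sub (hpos i)
    rw [this]
    ring
  rw [Equiv.ofBijective_apply, this, hval i]

lemma convex_permBody (r : ℕ) : Convex ℝ (permBody r) := by
  intro x hx y hy p q hp hq hpq
  constructor
  · have hs : ∑ j, (p • x + q • y) j = p * ∑ j, x j + q * ∑ j, y j := by
      simp only [Pi.add_apply, Pi.smul_apply, smul_eq_mul]
      rw [Finset.sum_add_distrib, Finset.mul_sum, Finset.mul_sum]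
    rw [hs, hx.1, hy.1]
    linear_combination ((r : ℝ) * ((r : ℝ) + 1) / 2) * hpq
  · intro E
    have hs : ∑ j ∈ E, (p • x + q • y) j = p * ∑ j ∈ E, x j + q * ∑ j ∈ E, y j := by
      simp only [Pi.add_apply, Pi.smul_apply, smul_eq_mul]
      rw [Finset.sum_add_distrib, Finset.mul_sum, Finset.mul_sum]
    rw [hs]
    have h1 := mul_le_mul_of_nonneg_left (hx.2 E) hp
    have h2 := mul_le_mul_of_nonneg_left (hy.2 E) hq
    have hg : p * ((E.card : ℝ) * ((E.card : ℝ) + 1) / 2) +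
        q * ((E.card : ℝ) * ((E.card : ℝ) + 1) / 2) =
        (E.card : ℝ) * ((E.card : ℝ) + 1) / 2 := by
      linear_combination ((E.card : ℝ) * ((E.card : ℝ) + 1) / 2) * hpq
    linarith [h1, h2, hg]

lemma perm_mem_permBody {r : ℕ} (σ : Equiv.Perm (Fin r)) :
    (fun i => ((σ i : ℕ) : ℝ) + 1) ∈ permBody r := by
  constructor
  · have h1 : ∑ i : Fin r, (((σ i : ℕ) : ℝ) + 1) = ∑ i : Fin r, (((i : ℕ) : ℝ) + 1) :=
      Equiv.sum_comp σ (fun i => ((i : ℕ) : ℝ) + 1)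
    rw [h1, Fin.sum_univ_eq_sum_range (fun k => ((k : ℕ) : ℝ) + 1), gauss_real]
  · intro E
    classical
    set s : Finset ℕ := E.image (fun j => (σ j : ℕ)) with hs
    have hinj : Set.InjOn (fun j => (σ j : ℕ)) E := fun u _ v _ h =>
      σ.injective (Fin.val_injective h)
    have hcard : s.card = E.card := Finset.card_image_of_injOn hinj
    have hsum : ∑ j ∈ E, (((σ j : ℕ) : ℝ) + 1) = ∑ x ∈ s, ((x : ℝ) + 1) := by
      rw [hs, Finset.sum_image (fun u hu v hv h => hinj hu hv h)]
    have hnat : ∑ k ∈ range s.card, k ≤ ∑ x ∈ s, x := sum_range_card_le_sum s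
    have hnat' : ∑ k ∈ range s.card, (k + 1) ≤ ∑ x ∈ s, (x + 1) := by
      rw [Finset.sum_add_distrib, Finset.sum_add_distrib]
      simpa using hnat
    have hreal : ∑ k ∈ range s.card, ((k : ℝ) + 1) ≤ ∑ x ∈ s, ((x : ℝ) + 1) := by
      have := Nat.cast_le (α := ℝ).2 hnat'
      push_cast at this
      convert this using 2
    rw [hsum, ← hcard]
    calc (s.card : ℝ) * ((s.card : ℝ) + 1) / 2 = ∑ k ∈ range s.card, ((k : ℝ) + 1) :=
          (gauss_real s.card).symm
      _ ≤ ∑ x ∈ s, ((x : ℝ) + 1) := hreal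

lemma permBody_isCompact (r : ℕ) (hr : 1 ≤ r) : IsCompact (permBody r) := by
  have hclosed : IsClosed (permBody r) := by
    have : permBody r = {a : Fin r → ℝ | ∑ j, a j = (r : ℝ) * ((r : ℝ) + 1) / 2} ∩
        ⋂ E : Finset (Fin r), {a | (E.card : ℝ) * ((E.card : ℝ) + 1) / 2 ≤ ∑ j ∈ E, a j} := by
      ext a; simp [permBody, Set.mem_iInter]
    rw [this]
    refine IsClosed.inter (isClosed_eq (by continuity) continuous_const) ?_
    exact isClosed_iInter fun E => isClosed_le continuous_const (by continuity)
  have hsub : permBody r ⊆ Set.pi Set.univ (fun _ : Fin r => Set.Icc (1 : ℝ) r) := by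
    intro a ha
    intro i _
    constructor
    · have h := ha.2 {i}
      simpa using h
    · have h := ha.2 (Finset.univ.erase i)
      have hc : (Finset.univ.erase i).card = r - 1 := by
        rw [Finset.card_erase_of_mem (Finset.mem_univ i)]
        simp
      have hsum : a i + ∑ x ∈ Finset.univ.erase i, a x = ∑ x, a x :=
        Finset.add_sum_erase _ _ (Finset.mem_univ i)
      rw [hc] at h
      have hcast : ((r - 1 : ℕ) : ℝ) = (r : ℝ) - 1 := by
        rw [Nat.cast_sub hr, Nat.cast_one]
      rw [hcast] at h
      have htot := ha.1
      nlinarith [h, hsum, htot]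
  exact (isCompact_univ_pi (fun _ => isCompact_Icc)).of_isClosed_subset hclosed hsub

/-- `𝒜_r`: the convex hull in ℝ^r of the set of all permutations of the vector (1, 2, ..., r). -/
def permsHull (r : ℕ) : Set (Fin r → ℝ) :=
  convexHull ℝ {v : Fin r → ℝ | ∃ σ : Equiv.Perm (Fin r), v = fun i => ((σ i : ℕ) : ℝ) + 1}

/-- 𝒜_r equals 𝒜_r* = { a : Σ a_j = r(r+1)/2 and Σ_{j∈E} a_j ≥ |E|(|E|+1)/2
for every subset E }. -/
theorem stmt_7 (r : ℕ) (hr : 1 ≤ r) :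
    permsHull r =
      {a : Fin r → ℝ |
        (∑ j, a j) = (r : ℝ) * ((r : ℝ) + 1) / 2 ∧
        ∀ E : Finset (Fin r), (E.card : ℝ) * ((E.card : ℝ) + 1) / 2 ≤ ∑ j ∈ E, a j} := by
  have hbody : {a : Fin r → ℝ |
      (∑ j, a j) = (r : ℝ) * ((r : ℝ) + 1) / 2 ∧
      ∀ E : Finset (Fin r), (E.card : ℝ) * ((E.card : ℝ) + 1) / 2 ≤ ∑ j ∈ E, a j} =
      permBody r := rfl
  rw [hbody]
  apply Set.Subset.antisymm
  · apply convexHull_min ?_ (convex_permBody r)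
    rintro v ⟨σ, rfl⟩
    exact perm_mem_permBody σ
  · intro a ha
    have hKM := closure_convexHull_extremePoints (permBody_isCompact r hr) (convex_permBody r)
    rw [← hKM] at ha
    have hsub : (permBody r).extremePoints ℝ ⊆
        {v : Fin r → ℝ | ∃ σ : Equiv.Perm (Fin r), v = fun i => ((σ i : ℕ) : ℝ) + 1} :=
      fun v hv => extremePoint_isPerm hv
    have hfin : ({v : Fin r → ℝ |
        ∃ σ : Equiv.Perm (Fin r), v = fun i => ((σ i : ℕ) : ℝ) + 1}).Finite := by
      have : {v : Fin r → ℝ | ∃ σ : Equiv.Perm (Fin r), v = fun i => ((σ i : ℕ) : ℝ) + 1} =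
          Set.range (fun σ : Equiv.Perm (Fin r) => fun i => ((σ i : ℕ) : ℝ) + 1) := by
        ext v
        exact ⟨fun ⟨σ, h⟩ => ⟨σ, h.symm⟩, fun ⟨σ, h⟩ => ⟨σ, h.symm⟩⟩
      rw [this]
      exact Set.finite_range _
    have hclosed : IsClosed (convexHull ℝ {v : Fin r → ℝ |
        ∃ σ : Equiv.Perm (Fin r), v = fun i => ((σ i : ℕ) : ℝ) + 1}) :=
      (hfin.isCompact_convexHull (𝕜 := ℝ)).isClosed
    have h2 : a ∈ closure (convexHull ℝ {v : Fin r → ℝ |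
        ∃ σ : Equiv.Perm (Fin r), v = fun i => ((σ i : ℕ) : ℝ) + 1}) :=
      closure_mono (convexHull_mono hsub) ha
    rwa [hclosed.closure_eq] at h2
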